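/- Let X_i, i ≥ 1, be sampled from the Zipf–Poisson ensemble with parameters α > 1 and N > 0. Then for every integer n ≥ 2, Pr(X_1 > X_2 > … > X_n) ≥ 1 − n·exp(−(N α² / 4) · n^{−α−2}). -/

import Mathlib

open MeasureTheory ProbabilityTheory


-- exp series in ENNReal
lemma aux_exp_tsum (t : ℝ) (ht : 0 ≤ t) :
    ∑' k : ℕ, ENNReal.ofReal (t ^ k / (Nat.factorial k)) = ENNReal.ofReal (Real.exp t) := by
  rw [← ENNReal.ofReal_tsum_of_nonneg (fun k => by positivity) (Real.summable_pow_div_factorial t)]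
  congr 1
  rw [Real.exp_eq_exp_ℝ, NormedSpace.exp_eq_tsum_div]

-- MVT gap bound
lemma aux_gap (β : ℝ) (hβ : 0 < β) (i n : ℕ) (hi : 1 ≤ i) (hin : i + 1 ≤ n) :
    β * (n : ℝ) ^ (-β - 1) ≤ (i : ℝ) ^ (-β) - ((i : ℝ) + 1) ^ (-β) := by
  have hi0 : (0:ℝ) < i := by exact_mod_cast hi
  obtain ⟨c, hc, hceq⟩ := exists_hasDerivAt_eq_slope (fun x : ℝ => x ^ (-β))
    (fun x => -β * x ^ (-β - 1)) (by linarith : (i:ℝ) < i + 1)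
    (fun x hx => by
      have hx0 : x ≠ 0 := (lt_of_lt_of_le hi0 hx.1).ne'
      exact (Real.continuousAt_rpow_const x (-β) (Or.inl hx0)).continuousWithinAt)
    (fun x hx => Real.hasDerivAt_rpow_const (Or.inl (lt_trans hi0 hx.1).ne'))
  have hc0 : (0:ℝ) < c := lt_trans hi0 hc.1
  have hcn : c ≤ (n:ℝ) := by
    have : (i:ℝ) + 1 ≤ n := by exact_mod_cast hin
    linarith [hc.2]
  have hmono : (n:ℝ) ^ (-β - 1) ≤ c ^ (-β - 1) :=
    Real.rpow_le_rpow_of_nonpos hc0 hcn (by linarith)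
  have heq : (i:ℝ) ^ (-β) - ((i:ℝ)+1) ^ (-β) = β * c ^ (-β - 1) := by
    have := hceq
    simp only [add_sub_cancel_left, div_one] at this
    linarith [this]
  rw [heq]
  nlinarith [Real.rpow_nonneg hc0.le (-β-1)]

lemma aux_chernoff {Ω : Type*} [MeasurableSpace Ω] (P : Measure Ω)
    (X Y : Ω → ℕ) (a b : ℝ) (hb : 0 < b) (hba : b ≤ a)
    (hX : ∀ k, P {ω | X ω = k} = ENNReal.ofReal (Real.exp (-a) * a ^ k / (Nat.factorial k)))
    (hY : ∀ l, P {ω | Y ω = l} = ENNReal.ofReal (Real.exp (-b) * b ^ l / (Nat.factorial l)))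
    (hind : ∀ k l, P ({ω | X ω = k} ∩ {ω | Y ω = l}) = P {ω | X ω = k} * P {ω | Y ω = l}) :
    P {ω | X ω ≤ Y ω} ≤ ENNReal.ofReal (Real.exp (-(Real.sqrt a - Real.sqrt b) ^ 2)) := by
  have ha : 0 < a := lt_of_lt_of_le hb hba
  set s : ℝ := Real.sqrt a / Real.sqrt b with hs_def
  have hsb : 0 < Real.sqrt b := Real.sqrt_pos.2 hb
  have hsa : 0 < Real.sqrt a := Real.sqrt_pos.2 ha
  have hs0 : 0 < s := div_pos hsa hsb
  have hs1 : 1 ≤ s := (one_le_div hsb).2 (Real.sqrt_le_sqrt hba)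
  set S : ℕ × ℕ → Set Ω := fun p => if p.1 ≤ p.2 then {ω | X ω = p.1} ∩ {ω | Y ω = p.2} else ∅
    with hS_def
  have hsub : {ω | X ω ≤ Y ω} ⊆ ⋃ p, S p := by
    intro ω hω
    refine Set.mem_iUnion.2 ⟨(X ω, Y ω), ?_⟩
    have h' : X ω ≤ Y ω := hω
    simp only [hS_def]
    rw [if_pos h']
    exact ⟨rfl, rfl⟩
  have key : ∀ p : ℕ × ℕ, P (S p) ≤
      ENNReal.ofReal (Real.exp (-a) * (a / s) ^ p.1 / (Nat.factorial p.1)) *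
      ENNReal.ofReal (Real.exp (-b) * (b * s) ^ p.2 / (Nat.factorial p.2)) := by
    rintro ⟨k, l⟩
    by_cases hkl : k ≤ l
    · have hP : P (S (k, l)) = ENNReal.ofReal (Real.exp (-a) * a ^ k / (Nat.factorial k)) *
          ENNReal.ofReal (Real.exp (-b) * b ^ l / (Nat.factorial l)) := by
        simp only [hS_def, if_pos hkl]
        rw [hind k l, hX k, hY l]
      rw [hP, ← ENNReal.ofReal_mul (by positivity), ← ENNReal.ofReal_mul (by positivity)]
      apply ENNReal.ofReal_le_ofReal
      have hsx : s ^ k ≤ s ^ l := pow_le_pow_right₀ hs1 hkl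
      have hRHS : Real.exp (-a) * (a / s) ^ k / (Nat.factorial k) *
          (Real.exp (-b) * (b * s) ^ l / (Nat.factorial l)) =
          Real.exp (-a) * a ^ k / (Nat.factorial k) *
          (Real.exp (-b) * b ^ l / (Nat.factorial l)) * (s ^ l / s ^ k) := by
        rw [div_pow, mul_pow]
        have hk : (Nat.factorial k : ℝ) ≠ 0 := by positivity
        have hl : (Nat.factorial l : ℝ) ≠ 0 := by positivity
        field_simp
      rw [hRHS]
      have h1 : (1:ℝ) ≤ s ^ l / s ^ k := (one_le_div (by positivity)).2 hsx
      have h0 : (0:ℝ) ≤ Real.exp (-a) * a ^ k / (Nat.factorial k) *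
          (Real.exp (-b) * b ^ l / (Nat.factorial l)) := by positivity
      nlinarith
    · simp only [hS_def, if_neg hkl]
      simp
  calc P {ω | X ω ≤ Y ω} ≤ P (⋃ p, S p) := measure_mono hsub
    _ ≤ ∑' p, P (S p) := measure_iUnion_le _
    _ ≤ ∑' p : ℕ × ℕ, ENNReal.ofReal (Real.exp (-a) * (a / s) ^ p.1 / (Nat.factorial p.1)) *
          ENNReal.ofReal (Real.exp (-b) * (b * s) ^ p.2 / (Nat.factorial p.2)) :=
        ENNReal.tsum_le_tsum key
    _ = (∑' k : ℕ, ENNReal.ofReal (Real.exp (-a) * (a / s) ^ k / (Nat.factorial k))) *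
          (∑' l : ℕ, ENNReal.ofReal (Real.exp (-b) * (b * s) ^ l / (Nat.factorial l))) := by
        rw [ENNReal.tsum_prod']
        simp_rw [ENNReal.tsum_mul_left, ENNReal.tsum_mul_right]
    _ = ENNReal.ofReal (Real.exp (a / s - a)) * ENNReal.ofReal (Real.exp (b * s - b)) := by
        have e1 : ∑' k : ℕ, ENNReal.ofReal (Real.exp (-a) * (a / s) ^ k / (Nat.factorial k))
            = ENNReal.ofReal (Real.exp (a / s - a)) := by
          have : ∀ k : ℕ, Real.exp (-a) * (a / s) ^ k / (Nat.factorial k)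
              = Real.exp (-a) * ((a / s) ^ k / (Nat.factorial k)) := fun k => by ring
          simp_rw [this, ENNReal.ofReal_mul (Real.exp_nonneg _), ENNReal.tsum_mul_left,
            aux_exp_tsum (a / s) (by positivity), ← ENNReal.ofReal_mul (Real.exp_nonneg _),
            ← Real.exp_add]
          ring_nf
        have e2 : ∑' l : ℕ, ENNReal.ofReal (Real.exp (-b) * (b * s) ^ l / (Nat.factorial l))
            = ENNReal.ofReal (Real.exp (b * s - b)) := by
          have : ∀ l : ℕ, Real.exp (-b) * (b * s) ^ l / (Nat.factorial l)
              = Real.exp (-b) * ((b * s) ^ l / (Nat.factorial l)) := fun l => by ring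
          simp_rw [this, ENNReal.ofReal_mul (Real.exp_nonneg _), ENNReal.tsum_mul_left,
            aux_exp_tsum (b * s) (by positivity), ← ENNReal.ofReal_mul (Real.exp_nonneg _),
            ← Real.exp_add]
          ring_nf
        rw [e1, e2]
    _ = ENNReal.ofReal (Real.exp (-(Real.sqrt a - Real.sqrt b) ^ 2)) := by
        rw [← ENNReal.ofReal_mul (Real.exp_nonneg _), ← Real.exp_add]
        congr 1
        have hsa2 : Real.sqrt a ^ 2 = a := Real.sq_sqrt ha.le
        have hsb2 : Real.sqrt b ^ 2 = b := Real.sq_sqrt hb.le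
        have h1 : a / s = Real.sqrt a * Real.sqrt b := by
          rw [hs_def]
          field_simp
          nlinarith
        have h2 : b * s = Real.sqrt a * Real.sqrt b := by
          rw [hs_def]
          field_simp
          nlinarith
        rw [h1, h2]
        congr 1
        nlinarith

lemma aux_sqrt_lam (N x α : ℝ) (hN : 0 ≤ N) (hx : 0 ≤ x) :
    Real.sqrt (N * x ^ (-α)) = Real.sqrt N * x ^ (-(α / 2)) := by
  rw [Real.sqrt_mul hN]
  congr 1
  rw [Real.sqrt_eq_rpow, ← Real.rpow_mul hx]
  congr 1
  ring

/-- The Zipf–Poisson ensemble with parameters `α > 1`, `N > 0`: the random variables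
`X i`, for integers `i ≥ 1`, are independent and `X i ~ Poisson(N * i^(-α))`. -/
def IsZipfPoisson {Ω : Type*} [MeasurableSpace Ω] (P : Measure Ω)
    (X : ℕ → Ω → ℕ) (α N : ℝ) : Prop :=
  iIndepFun (fun i : {i : ℕ // 1 ≤ i} => X i) P ∧
  ∀ i : ℕ, 1 ≤ i → ∀ k : ℕ,
    P {ω | X i ω = k} =
      ENNReal.ofReal (Real.exp (-(N * (i : ℝ) ^ (-α))) * (N * (i : ℝ) ^ (-α)) ^ k /
        (Nat.factorial k))

theorem zipf_poisson_order_bound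
    {Ω : Type*} [MeasurableSpace Ω] (P : Measure Ω) [IsProbabilityMeasure P]
    (X : ℕ → Ω → ℕ) (α N : ℝ) (hα : 1 < α) (hN : 0 < N)
    (hzp : IsZipfPoisson P X α N) (n : ℕ) (hn : 2 ≤ n) :
    ENNReal.ofReal
        (1 - n * Real.exp (-(N * α ^ 2 / 4) * (n : ℝ) ^ (-α - 2)))
      ≤ P {ω | ∀ i : ℕ, 1 ≤ i → i < n → X (i + 1) ω < X i ω} := by
  set E : Set Ω := {ω | ∀ i : ℕ, 1 ≤ i → i < n → X (i + 1) ω < X i ω} with hE_def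
  set e : ℝ := Real.exp (-(N * α ^ 2 / 4) * (n : ℝ) ^ (-α - 2)) with he_def
  have he0 : 0 ≤ e := Real.exp_nonneg _
  -- single comparison bound
  have hsingle : ∀ i : ℕ, 1 ≤ i → i < n →
      P {ω | X i ω ≤ X (i + 1) ω} ≤ ENNReal.ofReal e := by
    intro i hi hin
    have hi0 : (0:ℝ) < i := by exact_mod_cast hi
    have hi10 : (0:ℝ) < (i:ℝ) + 1 := by linarith
    set a : ℝ := N * (i : ℝ) ^ (-α) with ha_def
    set b : ℝ := N * ((i : ℝ) + 1) ^ (-α) with hb_def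
    have hb : 0 < b := by
      have : (0:ℝ) < ((i:ℝ) + 1) ^ (-α) := Real.rpow_pos_of_pos hi10 _
      positivity
    have hba : b ≤ a := by
      have := Real.rpow_le_rpow_of_nonpos hi0 (by linarith : (i:ℝ) ≤ (i:ℝ) + 1)
        (by linarith : -α ≤ 0)
      exact mul_le_mul_of_nonneg_left this hN.le
    have hX' : ∀ k, P {ω | X i ω = k}
        = ENNReal.ofReal (Real.exp (-a) * a ^ k / (Nat.factorial k)) := hzp.2 i hi
    have hcast : ((i + 1 : ℕ) : ℝ) = (i : ℝ) + 1 := by push_cast; ring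
    have hY' : ∀ l, P {ω | X (i + 1) ω = l}
        = ENNReal.ofReal (Real.exp (-b) * b ^ l / (Nat.factorial l)) := by
      intro l
      have := hzp.2 (i + 1) (by omega) l
      rwa [hcast] at this
    have hind : ∀ k l, P ({ω | X i ω = k} ∩ {ω | X (i + 1) ω = l})
        = P {ω | X i ω = k} * P {ω | X (i + 1) ω = l} := by
      intro k l
      have hne : (⟨i, hi⟩ : {j : ℕ // 1 ≤ j}) ≠ ⟨i + 1, by omega⟩ := by
        simp [Subtype.ext_iff]
      have hIF : IndepFun (X i) (X (i + 1)) P := hzp.1.indepFun hne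
      exact hIF.measure_inter_preimage_eq_mul {k} {l}
        (measurableSet_singleton _) (measurableSet_singleton _)
    refine (aux_chernoff P (X i) (X (i + 1)) a b hb hba hX' hY' hind).trans ?_
    apply ENNReal.ofReal_le_ofReal
    rw [he_def]
    apply Real.exp_le_exp.2
    have hkey : N * α ^ 2 / 4 * (n : ℝ) ^ (-α - 2) ≤ (Real.sqrt a - Real.sqrt b) ^ 2 := by
      have hsa : Real.sqrt a = Real.sqrt N * (i : ℝ) ^ (-(α / 2)) :=
        aux_sqrt_lam N i α hN.le hi0.le
      have hsb : Real.sqrt b = Real.sqrt N * ((i : ℝ) + 1) ^ (-(α / 2)) :=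
        aux_sqrt_lam N ((i:ℝ)+1) α hN.le hi10.le
      have hgap := aux_gap (α / 2) (by linarith) i n hi (by omega)
      have hdiff : Real.sqrt N * (α / 2 * (n : ℝ) ^ (-(α / 2) - 1))
          ≤ Real.sqrt a - Real.sqrt b := by
        rw [hsa, hsb, ← mul_sub]
        exact mul_le_mul_of_nonneg_left (by exact_mod_cast hgap) (Real.sqrt_nonneg N)
      have hL0 : 0 ≤ Real.sqrt N * (α / 2 * (n : ℝ) ^ (-(α / 2) - 1)) := by
        have hn0 : (0:ℝ) < n := by positivity
        have := Real.rpow_nonneg hn0.le (-(α / 2) - 1)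
        positivity
      have hsq := pow_le_pow_left₀ hL0 hdiff 2
      have hn0 : (0:ℝ) < n := by
        have : (0:ℕ) < n := by omega
        exact_mod_cast this
      have hNsq : Real.sqrt N ^ 2 = N := Real.sq_sqrt hN.le
      have hpow : ((n:ℝ) ^ (-(α / 2) - 1)) ^ 2 = (n:ℝ) ^ (-α - 2) := by
        rw [sq, ← Real.rpow_add hn0]
        congr 1
        ring
      have heq : (Real.sqrt N * (α / 2 * (n : ℝ) ^ (-(α / 2) - 1))) ^ 2
          = N * α ^ 2 / 4 * (n : ℝ) ^ (-α - 2) := by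
        rw [mul_pow, hNsq, mul_pow, hpow]
        ring
      linarith
    nlinarith [hkey]
  -- union bound
  have hEc : Eᶜ ⊆ ⋃ i ∈ Finset.Ico 1 n, {ω | X i ω ≤ X (i + 1) ω} := by
    intro ω hω
    simp only [hE_def, Set.mem_compl_iff, Set.mem_setOf_eq, not_forall] at hω
    obtain ⟨i, h1, h2, h3⟩ := hω
    refine Set.mem_biUnion (Finset.mem_Ico.2 ⟨h1, h2⟩) ?_
    exact not_lt.1 h3
  have hPEc : P Eᶜ ≤ ENNReal.ofReal ((n : ℝ) * e) := by
    calc P Eᶜ ≤ ∑ i ∈ Finset.Ico 1 n, P {ω | X i ω ≤ X (i + 1) ω} :=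
          (measure_mono hEc).trans (measure_biUnion_finset_le _ _)
      _ ≤ ∑ i ∈ Finset.Ico 1 n, ENNReal.ofReal e := by
          refine Finset.sum_le_sum fun i hi => ?_
          rw [Finset.mem_Ico] at hi
          exact hsingle i hi.1 hi.2
      _ = (n - 1 : ℕ) * ENNReal.ofReal e := by
          rw [Finset.sum_const, Nat.card_Ico, nsmul_eq_mul]
      _ ≤ (n : ℕ) * ENNReal.ofReal e := by
          gcongr
          exact_mod_cast Nat.sub_le n 1
      _ = ENNReal.ofReal ((n : ℝ) * e) := by
          rw [ENNReal.ofReal_mul (by positivity), ENNReal.ofReal_natCast]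
  have huniv : (1 : ENNReal) ≤ P E + P Eᶜ := by
    have := measure_union_le (μ := P) E Eᶜ
    rwa [Set.union_compl_self, measure_univ] at this
  calc ENNReal.ofReal (1 - (n : ℝ) * e) = 1 - ENNReal.ofReal ((n : ℝ) * e) := by
        rw [ENNReal.ofReal_sub _ (by positivity), ENNReal.ofReal_one]
    _ ≤ 1 - P Eᶜ := tsub_le_tsub_left hPEc 1
    _ ≤ P E := tsub_le_iff_right.2 huniv
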